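/- Let 0 < a ≤ 1 and let ρ be a nonnegative integrable function on [0,1]² with ∫₀¹ ρ(x,t) dt = 1 for a.e. x, satisfying for a.e. (x,y): ρ(x,y) = g₀ᵃ'(x) f₀ᵃ'(y) ρ(g₀ᵃ(x), f₀ᵃ(y)) when 0 ≤ y < 1/2 and ρ(x,y) = g₁ᵃ'(x) f₁ᵃ'(y) ρ(g₁ᵃ(x), f₁ᵃ(y)) when 1/2 ≤ y < 1. Then the partial cumulative function r(x,y) := ∫₀^y ρ(x,t) dt satisfies, for a.e. x and every y: r(x,y) = ((1+a)/2 − ax)·r(g₀ᵃ(x), f₀ᵃ(y)) for y ∈ [0,1/2], and r(x,y) = (1+a)/2 − ax + ((1−a)/2 + ax)·r(g₁ᵃ(x), f₁ᵃ(y)) for y ∈ [1/2,1]. -/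

import Mathlib

open Set MeasureTheory

/-- Left branch of the anti-symmetric cusp map:
`f₀ᵃ(x) = ((a+1)/(2a))·(1 - √(1 - 8ax/(a+1)²))` on `[0,1/2]`. -/
noncomputable def f0a (a x : ℝ) : ℝ :=
  ((a + 1) / (2 * a)) * (1 - Real.sqrt (1 - 8 * a * x / (a + 1) ^ 2))

/-- Right branch of the anti-symmetric cusp map: `f₁ᵃ(x) = 1 - f₀ᵃ(1-x)` on `[1/2,1]`. -/
noncomputable def f1a (a x : ℝ) : ℝ := 1 - f0a a (1 - x)

/-- Inverse of the left branch: `g₀ᵃ(x) = ((1+a)/2)x - (a/2)x²`. -/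
noncomputable def g0a (a x : ℝ) : ℝ := ((1 + a) / 2) * x - (a / 2) * x ^ 2

/-- Inverse of the right branch: `g₁ᵃ(x) = 1/2 + ((1-a)/2)x + (a/2)x²`. -/
noncomputable def g1a (a x : ℝ) : ℝ := 1 / 2 + ((1 - a) / 2) * x + (a / 2) * x ^ 2

noncomputable def Da (a t : ℝ) : ℝ := 2 / ((a + 1) * Real.sqrt (1 - 8 * a * t / (a + 1) ^ 2))

section
variable {a : ℝ} (ha : 0 < a) (ha1 : a ≤ 1)
include ha ha1

lemma arg_pos {t : ℝ} (ht : t < 1/2) : 0 < 1 - 8 * a * t / (a + 1) ^ 2 := by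
  rw [sub_pos, div_lt_one (by positivity)]
  nlinarith [sq_nonneg (a - 1)]

lemma arg_nonneg {t : ℝ} (ht : t ≤ 1/2) : 0 ≤ 1 - 8 * a * t / (a + 1) ^ 2 := by
  rw [sub_nonneg, div_le_one (by positivity)]
  nlinarith [sq_nonneg (a - 1)]

lemma Da_pos {t : ℝ} (ht : t < 1/2) : 0 < Da a t := by
  have := arg_pos ha ha1 ht
  unfold Da
  positivity

lemma f0a_hasDerivAt {t : ℝ} (ht : t < 1/2) : HasDerivAt (f0a a) (Da a t) t := by
  have hu : 0 < 1 - 8 * a * t / (a + 1) ^ 2 := arg_pos ha ha1 ht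
  have h1 : HasDerivAt (fun t : ℝ => 1 - 8 * a * t / (a + 1) ^ 2)
      (-(8 * a / (a + 1) ^ 2)) t := by
    have : HasDerivAt (fun t : ℝ => 8 * a * t / (a + 1) ^ 2) (8 * a / (a + 1) ^ 2) t := by
      simpa using ((hasDerivAt_id t).const_mul (8 * a)).div_const ((a + 1) ^ 2)
    simpa using this.const_sub 1
  have h2 := (Real.hasDerivAt_sqrt (ne_of_gt hu)).comp t h1
  have h3 := (h2.const_sub 1).const_mul ((a + 1) / (2 * a))
  refine h3.congr_deriv (Eq.symm ?_)
  unfold Da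
  generalize hs : Real.sqrt (1 - 8 * a * t / (a + 1) ^ 2) = s
  have hs0 : s ≠ 0 := by rw [← hs]; positivity
  have ha' : a ≠ 0 := ne_of_gt ha
  have ha1' : a + 1 ≠ 0 := by linarith
  field_simp
  ring

lemma f0a_strictMonoOn : StrictMonoOn (f0a a) (Iic (1/2)) := by
  intro t1 h1 t2 h2 h12
  have hs : Real.sqrt (1 - 8 * a * t2 / (a + 1) ^ 2) < Real.sqrt (1 - 8 * a * t1 / (a + 1) ^ 2) := by
    apply Real.sqrt_lt_sqrt (arg_nonneg ha ha1 h2)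
    have : 8 * a * t1 / (a + 1) ^ 2 < 8 * a * t2 / (a + 1) ^ 2 := by
      apply div_lt_div_of_pos_right ?_ (by positivity)
      nlinarith
    linarith
  have hc : 0 < (a + 1) / (2 * a) := by positivity
  unfold f0a
  nlinarith

lemma f0a_zero : f0a a 0 = 0 := by
  simp [f0a]

lemma f0a_half : f0a a (1/2) = 1 := by
  have h : 1 - 8 * a * (1/2) / (a + 1) ^ 2 = ((1 - a) / (a + 1)) ^ 2 := by
    field_simp
    ring
  have h2 : (0:ℝ) ≤ (1 - a) / (a + 1) := by
    apply div_nonneg <;> linarith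
  rw [f0a, h, Real.sqrt_sq h2]
  field_simp
  ring

lemma f0a_g0a {x : ℝ} (hx0 : 0 ≤ x) (hx1 : x ≤ 1) : f0a a (g0a a x) = x := by
  have h : 1 - 8 * a * (g0a a x) / (a + 1) ^ 2 = ((a + 1 - 2 * a * x) / (a + 1)) ^ 2 := by
    unfold g0a
    field_simp
    ring
  have h2 : (0:ℝ) ≤ (a + 1 - 2 * a * x) / (a + 1) := by
    apply div_nonneg ?_ (by linarith)
    nlinarith
  rw [f0a, h, Real.sqrt_sq h2]
  field_simp
  ring

lemma g0a_mem {x : ℝ} (hx0 : 0 ≤ x) (hx1 : x ≤ 1) : g0a a x ∈ Icc (0:ℝ) (1/2) := by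
  unfold g0a
  have h1 : (0:ℝ) ≤ (1 - x) * (1 - a * x) := by
    apply mul_nonneg <;> nlinarith
  constructor <;> nlinarith

end

lemma f0a_continuous (a : ℝ) : Continuous (f0a a) := by
  unfold f0a
  continuity

lemma f1a_continuous (a : ℝ) : Continuous (f1a a) := by
  unfold f1a
  exact continuous_const.sub ((f0a_continuous a).comp (continuous_const.sub continuous_id))

section
variable {a : ℝ} (ha : 0 < a) (ha1 : a ≤ 1)
include ha ha1

lemma f1a_hasDerivAt {t : ℝ} (ht : 1/2 < t) : HasDerivAt (f1a a) (Da a (1 - t)) t := by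
  have h0 : HasDerivAt (fun t : ℝ => 1 - t) (-1) t := by
    simpa using (hasDerivAt_id t).const_sub 1
  have h := (f0a_hasDerivAt ha ha1 (show (1:ℝ) - t < 1/2 by linarith)).comp t h0
  have h2 := h.const_sub 1
  refine h2.congr_deriv (Eq.symm ?_)
  ring

lemma f1a_strictMonoOn : StrictMonoOn (f1a a) (Ici (1/2)) := by
  intro t1 h1 t2 h2 h12
  have := f0a_strictMonoOn ha ha1 (show (1:ℝ) - t2 ∈ Iic (1/2) by simp at h2 ⊢; linarith)
    (show (1:ℝ) - t1 ∈ Iic (1/2) by simp at h1 ⊢; linarith) (by linarith)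
  unfold f1a
  linarith

lemma f1a_half : f1a a (1/2) = 0 := by
  rw [f1a, show (1:ℝ) - 1/2 = 1/2 by norm_num, f0a_half ha ha1]
  norm_num

lemma f0a_image {y : ℝ} (hy0 : 0 ≤ y) (hy : y ≤ 1/2) :
    f0a a '' Ioo 0 y = Ioo 0 (f0a a y) := by
  apply Subset.antisymm
  · rintro _ ⟨t, ht, rfl⟩
    constructor
    · have := f0a_strictMonoOn ha ha1 (show (0:ℝ) ∈ Iic (1/2) by norm_num)
        (show t ∈ Iic (1/2) by simp; linarith [ht.2]) ht.1
      rwa [f0a_zero ha ha1] at this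
    · exact f0a_strictMonoOn ha ha1 (show t ∈ Iic (1/2) by simp; linarith [ht.2])
        (show y ∈ Iic (1/2) from hy) ht.2
  · have := intermediate_value_Ioo hy0 ((f0a_continuous a).continuousOn (s := Icc 0 y))
    rwa [f0a_zero ha ha1] at this

lemma f1a_image {y : ℝ} (hy0 : 1/2 ≤ y) (hy : y ≤ 1) :
    f1a a '' Ioo (1/2) y = Ioo 0 (f1a a y) := by
  apply Subset.antisymm
  · rintro _ ⟨t, ht, rfl⟩
    constructor
    · have := f1a_strictMonoOn ha ha1 (show (1/2:ℝ) ∈ Ici (1/2) by norm_num)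
        (show t ∈ Ici (1/2) by simp; linarith [ht.1]) ht.1
      rwa [f1a_half ha ha1] at this
    · exact f1a_strictMonoOn ha ha1 (show t ∈ Ici (1/2) by simp; linarith [ht.1])
        (show y ∈ Ici (1/2) from hy0) ht.2
  · have := intermediate_value_Ioo hy0 ((f1a_continuous a).continuousOn (s := Icc (1/2) y))
    rwa [f1a_half ha ha1] at this

lemma cov0 (φ : ℝ → ℝ) {y : ℝ} (hy0 : 0 ≤ y) (hy : y ≤ 1/2) :
    ∫ s in Ioo 0 (f0a a y), φ s = ∫ t in Ioo 0 y, Da a t * φ (f0a a t) := by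
  rw [← f0a_image ha ha1 hy0 hy,
    integral_image_eq_integral_abs_deriv_smul measurableSet_Ioo
      (fun t ht => (f0a_hasDerivAt ha ha1 (by linarith [ht.2] : t < 1/2)).hasDerivWithinAt)
      (((f0a_strictMonoOn ha ha1).injOn).mono (fun t ht => by
        simp only [mem_Iic]; linarith [ht.2] : Ioo 0 y ⊆ Iic (1/2))) φ]
  apply setIntegral_congr_fun measurableSet_Ioo
  intro t ht
  simp only [smul_eq_mul]
  rw [abs_of_pos (Da_pos ha ha1 (by linarith [ht.2] : t < 1/2))]

lemma cov1 (φ : ℝ → ℝ) {y : ℝ} (hy0 : 1/2 ≤ y) (hy : y ≤ 1) :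
    ∫ s in Ioo 0 (f1a a y), φ s = ∫ t in Ioo (1/2) y, Da a (1 - t) * φ (f1a a t) := by
  rw [← f1a_image ha ha1 hy0 hy,
    integral_image_eq_integral_abs_deriv_smul (f' := fun t => Da a (1 - t)) measurableSet_Ioo
      (fun t ht => (f1a_hasDerivAt ha ha1 ht.1).hasDerivWithinAt)
      (((f1a_strictMonoOn ha ha1).injOn).mono (fun t ht => le_of_lt ht.1 : Ioo (1/2) y ⊆ Ici (1/2))) φ]
  apply setIntegral_congr_fun measurableSet_Ioo
  intro t ht
  simp only [smul_eq_mul]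
  rw [abs_of_pos (Da_pos ha ha1 (by linarith [ht.1] : (1:ℝ) - t < 1/2))]

lemma g0a_deriv (x : ℝ) : deriv (g0a a) x = (1 + a) / 2 - a * x := by
  have h1 : HasDerivAt (fun x : ℝ => ((1 + a) / 2) * x) ((1 + a) / 2) x := by
    simpa using (hasDerivAt_id x).const_mul ((1 + a) / 2)
  have h2 : HasDerivAt (fun x : ℝ => (a / 2) * x ^ 2) (a * x) x := by
    have := (hasDerivAt_pow 2 x).const_mul (a / 2)
    refine this.congr_deriv (Eq.symm ?_)
    simp
    ring
  exact (h1.sub h2).deriv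

lemma g1a_deriv (x : ℝ) : deriv (g1a a) x = (1 - a) / 2 + a * x := by
  have h1 : HasDerivAt (fun x : ℝ => 1/2 + ((1 - a) / 2) * x) ((1 - a) / 2) x := by
    have h := ((hasDerivAt_id x).const_mul ((1 - a) / 2)).const_add (1/2 : ℝ)
    simpa using h
  have h2 : HasDerivAt (fun x : ℝ => (a / 2) * x ^ 2) (a * x) x := by
    have := (hasDerivAt_pow 2 x).const_mul (a / 2)
    refine this.congr_deriv (Eq.symm ?_)
    simp
    ring
  exact (h1.add h2).deriv

lemma g0a_pullback_null {N : Set ℝ} (hN : volume N = 0) :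
    volume {x ∈ Icc (0:ℝ) 1 | g0a a x ∈ N} = 0 := by
  have hsub : {x ∈ Icc (0:ℝ) 1 | g0a a x ∈ N} ⊆
      f0a a '' (N ∩ Ico 0 (1/2)) ∪ {f0a a (1/2)} := by
    rintro x ⟨hx, hxN⟩
    have hmem := g0a_mem ha ha1 hx.1 hx.2
    rcases lt_or_eq_of_le hmem.2 with h | h
    · left
      exact ⟨g0a a x, ⟨hxN, hmem.1, h⟩, f0a_g0a ha ha1 hx.1 hx.2⟩
    · right
      rw [← f0a_g0a ha ha1 hx.1 hx.2, h]
      rfl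
  apply measure_mono_null hsub
  apply measure_union_null
  · apply addHaar_image_eq_zero_of_differentiableOn_of_addHaar_eq_zero
    · intro t ht
      exact (f0a_hasDerivAt ha ha1 ht.2.2).differentiableAt.differentiableWithinAt
    · exact measure_mono_null inter_subset_left hN
  · exact measure_singleton _

end

/-- If `ρ` is a nonnegative integrable invariant density of the
two-dimensional cusp map `F⁽ᵃ⁾` whose `y`-sections integrate to `1`, then the
partial cumulative function `r(x,y) = ∫₀^y ρ(x,t) dt` satisfies the cumulative
functional equation, for a.e. `x` and every `y`. -/
theorem cusp_cumulative_functional_equation (a : ℝ) (ha : 0 < a) (ha1 : a ≤ 1)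
    (ρ : ℝ × ℝ → ℝ)
    (hρpos : ∀ p ∈ Icc (0:ℝ) 1 ×ˢ Icc (0:ℝ) 1, 0 ≤ ρ p)
    (hρint : IntegrableOn ρ (Icc 0 1 ×ˢ Icc 0 1))
    (hρnorm : ∀ᵐ x ∂(volume.restrict (Icc (0:ℝ) 1)), (∫ t in Icc (0:ℝ) 1, ρ (x, t)) = 1)
    (hρinv : ∀ᵐ p ∂(volume.restrict (Icc (0:ℝ) 1 ×ˢ Icc (0:ℝ) 1)),
      (p.2 < 1/2 →
        ρ p = deriv (g0a a) p.1 * deriv (f0a a) p.2 * ρ (g0a a p.1, f0a a p.2)) ∧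
      (1/2 ≤ p.2 →
        ρ p = deriv (g1a a) p.1 * deriv (f1a a) p.2 * ρ (g1a a p.1, f1a a p.2)))
    (r : ℝ → ℝ → ℝ)
    (hr : ∀ x y, r x y = ∫ t in (0:ℝ)..y, ρ (x, t)) :
    ∀ᵐ x ∂(volume.restrict (Icc (0:ℝ) 1)),
      (∀ y ∈ Icc (0:ℝ) (1/2),
        r x y = ((1 + a) / 2 - a * x) * r (g0a a x) (f0a a y)) ∧
      (∀ y ∈ Icc (1/2:ℝ) 1,
        r x y = (1 + a) / 2 - a * x + ((1 - a) / 2 + a * x) * r (g1a a x) (f1a a y)) := by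
  have hmeas : volume.restrict (Icc (0:ℝ) 1 ×ˢ Icc (0:ℝ) 1)
      = (volume.restrict (Icc (0:ℝ) 1)).prod (volume.restrict (Icc (0:ℝ) 1)) := by
    rw [Measure.prod_restrict, ← Measure.volume_eq_prod]
  rw [hmeas] at hρinv
  have hρint' : Integrable ρ
      ((volume.restrict (Icc (0:ℝ) 1)).prod (volume.restrict (Icc (0:ℝ) 1))) := by
    rw [← hmeas]; exact hρint
  have hsec : ∀ᵐ x ∂(volume.restrict (Icc (0:ℝ) 1)),
      IntegrableOn (fun t => ρ (x, t)) (Icc (0:ℝ) 1) := hρint'.prod_right_ae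
  have hinv2 := Measure.ae_ae_of_ae_prod hρinv
  have hnormg : ∀ᵐ x ∂(volume.restrict (Icc (0:ℝ) 1)),
      (∫ t in Icc (0:ℝ) 1, ρ (g0a a x, t)) = 1 := by
    have hN : volume ({x | ¬ (∫ t in Icc (0:ℝ) 1, ρ (x, t)) = 1} ∩ Icc (0:ℝ) 1) = 0 := by
      rw [← Measure.restrict_apply' measurableSet_Icc]
      exact hρnorm
    rw [ae_iff, Measure.restrict_apply' measurableSet_Icc]
    apply measure_mono_null ?_ (g0a_pullback_null ha ha1 hN)
    rintro x ⟨hx1, hx2⟩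
    refine ⟨hx2, hx1, ?_⟩
    have := g0a_mem ha ha1 hx2.1 hx2.2
    exact ⟨this.1, by linarith [this.2]⟩
  filter_upwards [hinv2, hsec, hnormg] with x hx hxint hxnorm
  have key0 : ∀ y, 0 ≤ y → y ≤ 1/2 →
      r x y = ((1 + a) / 2 - a * x) * r (g0a a x) (f0a a y) := by
    intro y hy0 hy
    have hsubset : Ioo (0:ℝ) y ⊆ Icc (0:ℝ) 1 :=
      fun t ht => ⟨le_of_lt ht.1, by linarith [ht.2]⟩
    have hid : (fun t => ρ (x, t)) =ᵐ[volume.restrict (Ioo (0:ℝ) y)]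
        (fun t => ((1 + a) / 2 - a * x) * (Da a t * ρ (g0a a x, f0a a t))) := by
      filter_upwards [ae_restrict_of_ae_restrict_of_subset hsubset hx,
        ae_restrict_mem measurableSet_Ioo] with t ht htm
      have ht2 : t < 1/2 := lt_of_lt_of_le htm.2 hy
      rw [ht.1 ht2, g0a_deriv ha ha1, (f0a_hasDerivAt ha ha1 ht2).deriv]
      ring
    have hf0y0 : 0 ≤ f0a a y := by
      rw [← f0a_zero ha ha1]
      exact (f0a_strictMonoOn ha ha1).monotoneOn
        (show (0:ℝ) ∈ Iic (1/2) by norm_num) (show y ∈ Iic (1/2) from hy) hy0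
    calc r x y = ∫ t in Ioo (0:ℝ) y, ρ (x, t) := by
          rw [hr, intervalIntegral.integral_of_le hy0, integral_Ioc_eq_integral_Ioo]
      _ = ((1 + a) / 2 - a * x) * ∫ t in Ioo (0:ℝ) y, Da a t * ρ (g0a a x, f0a a t) := by
          rw [integral_congr_ae hid, integral_const_mul]
      _ = ((1 + a) / 2 - a * x) * ∫ s in Ioo 0 (f0a a y), ρ (g0a a x, s) := by
          rw [cov0 ha ha1 _ hy0 hy]
      _ = ((1 + a) / 2 - a * x) * r (g0a a x) (f0a a y) := by
          rw [hr, intervalIntegral.integral_of_le hf0y0, integral_Ioc_eq_integral_Ioo]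
  refine ⟨fun y hy => key0 y hy.1 hy.2, fun y hy => ?_⟩
  obtain ⟨hy0, hy1⟩ := hy
  have hint01 : IntervalIntegrable (fun t => ρ (x, t)) volume 0 (1/2) := by
    apply IntegrableOn.intervalIntegrable
    apply hxint.mono_set
    rw [uIcc_of_le (by norm_num)]
    exact Icc_subset_Icc le_rfl (by norm_num)
  have hint12 : IntervalIntegrable (fun t => ρ (x, t)) volume (1/2) y := by
    apply IntegrableOn.intervalIntegrable
    apply hxint.mono_set
    rw [uIcc_of_le hy0]
    exact Icc_subset_Icc (by norm_num) hy1
  have hsplit : r x y = r x (1/2) + ∫ t in Ioo (1/2:ℝ) y, ρ (x, t) := by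
    rw [hr x y, hr x (1/2), ← intervalIntegral.integral_add_adjacent_intervals hint01 hint12]
    congr 1
    rw [intervalIntegral.integral_of_le hy0, integral_Ioc_eq_integral_Ioo]
  have hfirst : r x (1/2) = (1 + a) / 2 - a * x := by
    rw [key0 (1/2) (by norm_num) le_rfl, f0a_half ha ha1]
    have h1 : r (g0a a x) 1 = 1 := by
      rw [hr, intervalIntegral.integral_of_le (by norm_num : (0:ℝ) ≤ 1),
        ← integral_Icc_eq_integral_Ioc, hxnorm]
    rw [h1, mul_one]
  have hsubset : Ioo (1/2:ℝ) y ⊆ Icc (0:ℝ) 1 :=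
    fun t ht => ⟨by linarith [ht.1], le_of_lt (lt_of_lt_of_le ht.2 hy1)⟩
  have hid : (fun t => ρ (x, t)) =ᵐ[volume.restrict (Ioo (1/2:ℝ) y)]
      (fun t => ((1 - a) / 2 + a * x) * (Da a (1 - t) * ρ (g1a a x, f1a a t))) := by
    filter_upwards [ae_restrict_of_ae_restrict_of_subset hsubset hx,
      ae_restrict_mem measurableSet_Ioo] with t ht htm
    rw [ht.2 (le_of_lt htm.1), g1a_deriv ha ha1, (f1a_hasDerivAt ha ha1 htm.1).deriv]
    ring
  have hf1y0 : 0 ≤ f1a a y := by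
    rw [← f1a_half ha ha1]
    exact (f1a_strictMonoOn ha ha1).monotoneOn
      (show (1/2:ℝ) ∈ Ici (1/2) by norm_num) (show y ∈ Ici (1/2) from hy0) hy0
  have hsecond : ∫ t in Ioo (1/2:ℝ) y, ρ (x, t)
      = ((1 - a) / 2 + a * x) * r (g1a a x) (f1a a y) := by
    calc ∫ t in Ioo (1/2:ℝ) y, ρ (x, t)
        = ((1 - a) / 2 + a * x) * ∫ t in Ioo (1/2:ℝ) y, Da a (1 - t) * ρ (g1a a x, f1a a t) := by
          rw [integral_congr_ae hid, integral_const_mul]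
      _ = ((1 - a) / 2 + a * x) * ∫ s in Ioo 0 (f1a a y), ρ (g1a a x, s) := by
          rw [cov1 ha ha1 _ hy0 hy1]
      _ = ((1 - a) / 2 + a * x) * r (g1a a x) (f1a a y) := by
          rw [hr, intervalIntegral.integral_of_le hf1y0, integral_Ioc_eq_integral_Ioo]
  rw [hsplit, hfirst, hsecond]
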